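/- For all integers n ≥ 1 and 0 ≤ k ≤ n and all real numbers x and y > 0, the partial Bell polynomial evaluated at the vector with l-th entry (x)_l·y^{x−l} satisfies B_{n,k}((x)_1·y^{x−1}, (x)_2·y^{x−2}, …, (x)_{n−k+1}·y^{x−(n−k+1)}) = y^{xk−n}·s_{nk}(x). -/

import Mathlib

set_option maxHeartbeats 1000000


noncomputable section

/-- Stirling numbers of the first kind `s(n,k)` (signed), real-valued,
defined by the recurrence `s(n+1,k) = s(n,k-1) - n·s(n,k)`. -/
def st1 : ℕ → ℕ → ℝ
  | 0, 0 => 1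
  | 0, _ + 1 => 0
  | _ + 1, 0 => 0
  | n + 1, k + 1 => st1 n k - (n : ℝ) * st1 n (k + 1)

/-- Stirling numbers of the second kind `S(n,k)`, real-valued,
defined by the recurrence `S(n+1,k) = S(n,k-1) + k·S(n,k)`. -/
def st2 : ℕ → ℕ → ℝ
  | 0, 0 => 1
  | 0, _ + 1 => 0
  | _ + 1, 0 => 0
  | n + 1, k + 1 => st2 n k + ((k : ℝ) + 1) * st2 n (k + 1)

/-- `snk n k x = ∑_{l=k}^n s(n,l) S(l,k) x^l`. -/
def snk (n k : ℕ) (x : ℝ) : ℝ := ∑ l ∈ Finset.Icc k n, st1 n l * st2 l k * x ^ l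

/-- Falling factorial `(x)_n = x (x-1) ⋯ (x-n+1)`, with `(x)_0 = 1`. -/
def ff (x : ℝ) (n : ℕ) : ℝ := ∏ i ∈ Finset.range n, (x - (i : ℝ))

/-- The index set `P_{n,k}`: tuples `(j_1, …, j_{n-k+1})`, 0-indexed by `Fin (n-k+1)`
(entry `i` representing `j_{i+1}`), with `∑ i·j_i = n` and `∑ j_i = k`. -/
def PIdx (n k : ℕ) : Finset (Fin (n - k + 1) → ℕ) :=
  (Fintype.piFinset fun _ => Finset.range (n + 1)).filter fun j =>
    (∑ i, (i.1 + 1) * j i) = n ∧ (∑ i, j i) = k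

/-- The partial Bell polynomial `B_{n,k}(x_1,…,x_{n-k+1})`, the `l`-th argument being `x l`. -/
def bellP (n k : ℕ) (x : ℕ → ℝ) : ℝ :=
  ∑ j ∈ PIdx n k,
    ((n.factorial : ℝ) / ∏ i, ((j i).factorial : ℝ)) *
      ∏ i, (x (i.1 + 1) / ((i.1 + 1).factorial : ℝ)) ^ j i

/-- The index set `Q^{d₀}_{d,k} = { j : ∑ j_s = k, 1 ≤ j_s ≤ d_s }`. -/
def QIdx (d0 : ℕ) (dv : Fin d0 → ℕ) (k : ℕ) : Finset (Fin d0 → ℕ) :=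
  (Fintype.piFinset fun s => Finset.Icc 1 (dv s)).filter fun j => (∑ s, j s) = k

/-- Complete monotonicity of `h` on `(0,∞)`: `h` is infinitely differentiable there and
`(-1)^k h^{(k)}(t) ≥ 0` for all `k ∈ ℕ₀` and `t ∈ (0,∞)`. -/
def CMOn (h : ℝ → ℝ) : Prop :=
  ContDiffOn ℝ ⊤ h (Set.Ioi 0) ∧
    ∀ k : ℕ, ∀ t ∈ Set.Ioi (0 : ℝ), 0 ≤ (-1 : ℝ) ^ k * iteratedDerivWithin k h (Set.Ioi 0) t

/-- Partial derivative of `F : ℝ^ι → ℝ` in the coordinate `i`. -/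
def pdrv {ι : Type*} [DecidableEq ι] (i : ι) (F : (ι → ℝ) → ℝ) : (ι → ℝ) → ℝ :=
  fun x => deriv (fun y => F (Function.update x i y)) (x i)

def gS (m n k : ℕ) : Finset (Fin m → ℕ) :=
  (Fintype.piFinset fun _ => Finset.range (n + 1)).filter fun j =>
    (∑ i, (i.1 + 1) * j i) = n ∧ (∑ i, j i) = k

def w (f : ℕ → ℝ) (i c : ℕ) : ℝ := (f (i+1) / ((i+1).factorial : ℝ)) ^ c / (c.factorial : ℝ)

def u (f : ℕ → ℝ) {m : ℕ} (j : Fin m → ℕ) : ℝ := ∏ i, w f i.1 (j i)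

lemma w_zero (f : ℕ → ℝ) (i : ℕ) : w f i 0 = 1 := by simp [w]

lemma mem_gS {m n k : ℕ} {j : Fin m → ℕ} :
    j ∈ gS m n k ↔ (∑ i, (i.1 + 1) * j i) = n ∧ (∑ i, j i) = k := by
  simp only [gS, Finset.mem_filter, Fintype.mem_piFinset, Finset.mem_range, and_iff_right_iff_imp]
  rintro ⟨h1, h2⟩ i
  have : (i.1 + 1) * j i ≤ n := h1 ▸ Finset.single_le_sum (f := fun i => (i.1+1) * j i)
    (fun _ _ => Nat.zero_le _) (Finset.mem_univ i)
  have := le_trans (Nat.le_mul_of_pos_left (j i) (Nat.succ_pos _)) this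
  omega

lemma gS_k_le_sum {m n k : ℕ} {j : Fin m → ℕ} (hj : j ∈ gS m n k) (i : Fin m) :
    k + i.1 * j i ≤ n := by
  obtain ⟨h1, h2⟩ := mem_gS.1 hj
  have e : ∀ s : Fin m, (s.1 + 1) * j s = j s + s.1 * j s := fun s => by ring
  rw [Finset.sum_congr rfl (fun s _ => e s), Finset.sum_add_distrib, h2] at h1
  have : i.1 * j i ≤ ∑ s, s.1 * j s :=
    Finset.single_le_sum (f := fun s => s.1 * j s) (fun _ _ => Nat.zero_le _) (Finset.mem_univ i)
  omega

lemma gS_zero {m n k : ℕ} {j : Fin m → ℕ} (hj : j ∈ gS m n k) (i : Fin m)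
    (hi : n - k < i.1) : j i = 0 := by
  have h := gS_k_le_sum hj i
  by_contra hne
  have h1 : 1 ≤ j i := Nat.one_le_iff_ne_zero.2 hne
  have h2 : i.1 * 1 ≤ i.1 * j i := Nat.mul_le_mul_left _ h1
  omega

lemma sum_trunc {M : Type*} [AddCommMonoid M] {m d : ℕ} (h : d ≤ m) (F : Fin m → M)
    (hF : ∀ i : Fin m, d ≤ i.1 → F i = 0) :
    ∑ i, F i = ∑ i : Fin d, F (Fin.castLE h i) := by
  classical
  have e : ∑ i : Fin d, F (Fin.castLE h i) = ∑ i ∈ Finset.univ.map (Fin.castLEEmb h), F i := by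
    rw [Finset.sum_map]; rfl
  rw [e]
  apply (Finset.sum_subset (Finset.subset_univ _) ?_).symm
  intro i _ hi
  apply hF
  by_contra hlt; push_neg at hlt
  exact hi (Finset.mem_map.2 ⟨⟨i.1, hlt⟩, Finset.mem_univ _, by ext; rfl⟩)

lemma prod_trunc {M : Type*} [CommMonoid M] {m d : ℕ} (h : d ≤ m) (F : Fin m → M)
    (hF : ∀ i : Fin m, d ≤ i.1 → F i = 1) :
    ∏ i, F i = ∏ i : Fin d, F (Fin.castLE h i) := by
  classical
  have e : ∏ i : Fin d, F (Fin.castLE h i) = ∏ i ∈ Finset.univ.map (Fin.castLEEmb h), F i := by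
    rw [Finset.prod_map]; rfl
  rw [e]
  apply (Finset.prod_subset (Finset.subset_univ _) ?_).symm
  intro i _ hi
  apply hF
  by_contra hlt; push_neg at hlt
  exact hi (Finset.mem_map.2 ⟨⟨i.1, hlt⟩, Finset.mem_univ _, by ext; rfl⟩)

lemma sum_u_eq (f : ℕ → ℝ) {n k m : ℕ} (h : n - k + 1 ≤ m) :
    ∑ j ∈ gS m n k, u f j = ∑ j ∈ gS (n - k + 1) n k, u f j := by
  refine Finset.sum_nbij' (fun j => j ∘ Fin.castLE h)
    (fun j i => if h2 : i.1 < n - k + 1 then j ⟨i.1, h2⟩ else 0) ?_ ?_ ?_ ?_ ?_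
  · intro j hj
    obtain ⟨h1, h2⟩ := mem_gS.1 hj
    refine mem_gS.2 ⟨?_, ?_⟩
    · exact (sum_trunc h (fun i => (i.1+1) * j i)
        (fun i hi => by beta_reduce; rw [gS_zero hj i (by omega), mul_zero])).symm.trans h1
    · exact (sum_trunc h (fun i => j i) (fun i hi => gS_zero hj i (by omega))).symm.trans h2
  · intro j hj
    obtain ⟨h1, h2⟩ := mem_gS.1 hj
    refine mem_gS.2 ⟨?_, ?_⟩
    · refine ((sum_trunc h (fun i => (i.1+1) * (if h2 : i.1 < n - k + 1 then j ⟨i.1, h2⟩ else 0))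
        (fun i hi => by beta_reduce; rw [dif_neg (by omega), mul_zero])).trans ?_).trans h1
      refine Finset.sum_congr rfl fun i _ => ?_
      show (i.1+1) * (if h2 : (Fin.castLE h i).1 < n - k + 1 then j ⟨(Fin.castLE h i).1, h2⟩ else 0)
        = (i.1+1) * j i
      rw [dif_pos (show (Fin.castLE h i).1 < n - k + 1 from i.2)]
      exact congrArg _ (congrArg j (Fin.ext rfl))
    · refine ((sum_trunc h (fun i => (if h2 : i.1 < n - k + 1 then j ⟨i.1, h2⟩ else 0))
        (fun i hi => by beta_reduce; rw [dif_neg (by omega)])).trans ?_).trans h2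
      refine Finset.sum_congr rfl fun i _ => ?_
      show (if h2 : (Fin.castLE h i).1 < n - k + 1 then j ⟨(Fin.castLE h i).1, h2⟩ else 0) = j i
      rw [dif_pos (show (Fin.castLE h i).1 < n - k + 1 from i.2)]
      exact congrArg j (Fin.ext rfl)
  · intro j hj
    funext i
    show (if h2 : i.1 < n - k + 1 then (j ∘ Fin.castLE h) ⟨i.1, h2⟩ else 0) = j i
    by_cases hc : i.1 < n - k + 1
    · rw [dif_pos hc]
      exact congrArg j (Fin.ext rfl)
    · rw [dif_neg hc]
      exact (gS_zero hj i (by omega)).symm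
  · intro j hj
    funext i
    show (if h2 : (Fin.castLE h i).1 < n - k + 1 then j ⟨(Fin.castLE h i).1, h2⟩ else 0) = j i
    rw [dif_pos (show (Fin.castLE h i).1 < n - k + 1 from i.2)]
    exact congrArg j (Fin.ext rfl)
  · intro j hj
    exact prod_trunc h (fun i => w f i.1 (j i))
      (fun i hi => by show w f i.1 (j i) = 1; rw [gS_zero hj i (by omega), w_zero])

lemma ff_succ (x : ℝ) (s : ℕ) : ff x (s+1) = ff x s * (x - s) := Finset.prod_range_succ _ _

lemma w_succ (f : ℕ → ℝ) (i d : ℕ) :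
    ((d:ℝ)+1) * w f i (d+1) = (f (i+1) / ((i+1).factorial : ℝ)) * w f i d := by
  have h1 : ((d+1).factorial : ℝ) = ((d:ℝ)+1) * (d.factorial : ℝ) := by
    rw [Nat.factorial_succ]; push_cast; ring
  have h2 : (d.factorial : ℝ) ≠ 0 := Nat.cast_ne_zero.2 d.factorial_ne_zero
  have h3 : ((d:ℝ)+1) ≠ 0 := by positivity
  rw [w, w, h1, pow_succ]
  field_simp

lemma sum_split1 {M : Type*} [AddCommMonoid M] {m : ℕ} (a : Fin m) (H : Fin m → M) :
    ∑ i, H i = H a + ∑ i ∈ Finset.univ.erase a, H i :=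
  (Finset.add_sum_erase _ H (Finset.mem_univ a)).symm

lemma update_erase_eq {m : ℕ} (j : Fin m → ℕ) (a : Fin m) (v : ℕ) (i : Fin m)
    (hi : i ∈ Finset.univ.erase a) : Function.update j a v i = j i :=
  Function.update_of_ne (Finset.mem_erase.1 hi).1 _ _

lemma ffx1 (x : ℝ) : ff x 1 = x := by simp [ff]

/-- Part A of the Bell recurrence: the `i = 0` contribution. -/

lemma partA (x : ℝ) (n k : ℕ) :
    ∑ j ∈ gS (n+2) (n+1) (k+1), (j 0 : ℝ) * u (ff x) j
      = x * ∑ j ∈ gS (n+2) n k, u (ff x) j := by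
  classical
  rw [← Finset.sum_filter_of_ne (p := fun j => j 0 ≠ 0)
    (by intro j _ hne h0; exact hne (by rw [h0, Nat.cast_zero, zero_mul]))]
  rw [Finset.mul_sum]
  refine Finset.sum_nbij' (fun j => Function.update j 0 (j 0 - 1))
    (fun j => Function.update j 0 (j 0 + 1)) ?_ ?_ ?_ ?_ ?_
  · intro j hj
    obtain ⟨hj, hne⟩ := Finset.mem_filter.1 hj
    obtain ⟨h1, h2⟩ := mem_gS.1 hj
    refine mem_gS.2 ⟨?_, ?_⟩
    · have e1 := sum_split1 (0 : Fin (n+2)) (fun i => (i.1+1) * j i)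
      rw [h1] at e1
      have e2 : ∑ i ∈ Finset.univ.erase 0, (i.1+1) * Function.update j 0 (j 0 - 1) i
          = ∑ i ∈ Finset.univ.erase 0, (i.1+1) * j i :=
        Finset.sum_congr rfl fun i hi => by rw [update_erase_eq _ _ _ _ hi]
      rw [sum_split1 (0 : Fin (n+2)) (fun i => (i.1+1) * Function.update j 0 (j 0 - 1) i), e2]
      simp only [Function.update_self, Fin.val_zero] at e1 ⊢
      omega
    · have e1 := sum_split1 (0 : Fin (n+2)) (fun i => j i)
      rw [h2] at e1
      have e2 : ∑ i ∈ Finset.univ.erase 0, Function.update j 0 (j 0 - 1) i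
          = ∑ i ∈ Finset.univ.erase 0, j i :=
        Finset.sum_congr rfl fun i hi => by rw [update_erase_eq _ _ _ _ hi]
      rw [sum_split1 (0 : Fin (n+2)) (fun i => Function.update j 0 (j 0 - 1) i), e2]
      simp only [Function.update_self] at e1 ⊢
      omega
  · intro j hj
    obtain ⟨h1, h2⟩ := mem_gS.1 hj
    refine Finset.mem_filter.2 ⟨mem_gS.2 ⟨?_, ?_⟩, by simp [Function.update_self]⟩
    · have e1 := sum_split1 (0 : Fin (n+2)) (fun i => (i.1+1) * j i)
      rw [h1] at e1
      have e2 : ∑ i ∈ Finset.univ.erase 0, (i.1+1) * Function.update j 0 (j 0 + 1) i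
          = ∑ i ∈ Finset.univ.erase 0, (i.1+1) * j i :=
        Finset.sum_congr rfl fun i hi => by rw [update_erase_eq _ _ _ _ hi]
      rw [sum_split1 (0 : Fin (n+2)) (fun i => (i.1+1) * Function.update j 0 (j 0 + 1) i), e2]
      simp only [Function.update_self, Fin.val_zero] at e1 ⊢
      omega
    · have e1 := sum_split1 (0 : Fin (n+2)) (fun i => j i)
      rw [h2] at e1
      have e2 : ∑ i ∈ Finset.univ.erase 0, Function.update j 0 (j 0 + 1) i
          = ∑ i ∈ Finset.univ.erase 0, j i :=
        Finset.sum_congr rfl fun i hi => by rw [update_erase_eq _ _ _ _ hi]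
      rw [sum_split1 (0 : Fin (n+2)) (fun i => Function.update j 0 (j 0 + 1) i), e2]
      simp only [Function.update_self] at e1 ⊢
      omega
  · intro j hj
    have hne : j 0 ≠ 0 := (Finset.mem_filter.1 hj).2
    have hv : j 0 - 1 + 1 = j 0 := by omega
    show Function.update (Function.update j 0 (j 0 - 1)) 0
      (Function.update j 0 (j 0 - 1) 0 + 1) = j
    rw [Function.update_self, Function.update_idem, hv, Function.update_eq_self]
  · intro j hj
    show Function.update (Function.update j 0 (j 0 + 1)) 0
      (Function.update j 0 (j 0 + 1) 0 - 1) = j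
    rw [Function.update_self, Function.update_idem, Nat.add_sub_cancel,
      Function.update_eq_self]
  · intro j hj
    have hne : j 0 ≠ 0 := (Finset.mem_filter.1 hj).2
    obtain ⟨d, hd⟩ : ∃ d, j 0 = d + 1 := ⟨j 0 - 1, by omega⟩
    have eu : u (ff x) j
        = w (ff x) 0 (j 0) * ∏ i ∈ Finset.univ.erase 0, w (ff x) i.1 (j i) := by
      rw [u, ← Finset.mul_prod_erase _ _ (Finset.mem_univ 0)]
      simp [Fin.val_zero]
    have eu' : u (ff x) (Function.update j 0 (j 0 - 1))
        = w (ff x) 0 (j 0 - 1) * ∏ i ∈ Finset.univ.erase 0, w (ff x) i.1 (j i) := by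
      rw [u, ← Finset.mul_prod_erase _ _ (Finset.mem_univ 0), Function.update_self]
      have : ∏ i ∈ Finset.univ.erase 0, w (ff x) i.1 (Function.update j 0 (j 0 - 1) i)
          = ∏ i ∈ Finset.univ.erase 0, w (ff x) i.1 (j i) :=
        Finset.prod_congr rfl fun i hi => by rw [update_erase_eq _ _ _ _ hi]
      rw [this]
      simp [Fin.val_zero]
    have hw := w_succ (ff x) 0 d
    rw [ffx1] at hw
    norm_num at hw
    show (j 0 : ℝ) * u (ff x) j = x * u (ff x) (Function.update j 0 (j 0 - 1))
    rw [eu, eu', hd, Nat.add_sub_cancel]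
    push_cast
    rw [← mul_assoc, hw, mul_assoc]

lemma prod_split2 {M : Type*} [CommMonoid M] {m : ℕ} {a b : Fin m} (hab : a ≠ b)
    (H : Fin m → M) :
    ∏ i, H i = H a * (H b * ∏ i ∈ (Finset.univ.erase a).erase b, H i) := by
  rw [← Finset.mul_prod_erase _ H (Finset.mem_univ a),
    ← Finset.mul_prod_erase _ H (Finset.mem_erase.2 ⟨Ne.symm hab, Finset.mem_univ b⟩)]

lemma sum_split2 {M : Type*} [AddCommMonoid M] {m : ℕ} {a b : Fin m} (hab : a ≠ b)
    (H : Fin m → M) :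
    ∑ i, H i = H a + (H b + ∑ i ∈ (Finset.univ.erase a).erase b, H i) := by
  rw [← Finset.add_sum_erase _ H (Finset.mem_univ a),
    ← Finset.add_sum_erase _ H (Finset.mem_erase.2 ⟨Ne.symm hab, Finset.mem_univ b⟩)]

lemma keyA (x : ℝ) (t : ℕ) :
    ((t:ℝ)+2) * (ff x (t+2) / ((t+2).factorial : ℝ))
      = (x - ((t:ℝ)+1)) * (ff x (t+1) / ((t+1).factorial : ℝ)) := by
  rw [ff_succ x (t+1), Nat.factorial_succ (t+1)]
  have h1 : ((t+1).factorial : ℝ) ≠ 0 := Nat.cast_ne_zero.2 (t+1).factorial_ne_zero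
  have h2 : ((t:ℝ)+2) ≠ 0 := by positivity
  push_cast
  field_simp
  ring

/-- Part B of the Bell recurrence: the `i = t.succ` contribution. -/

lemma partB (x : ℝ) (n k : ℕ) (t : Fin (n+1)) :
    ∑ j ∈ gS (n+2) (n+1) (k+1), (((t.1+1+1) * j t.succ : ℕ) : ℝ) * u (ff x) j
      = ∑ j ∈ gS (n+2) n (k+1), (x - ((t.1:ℝ)+1)) * (j t.castSucc : ℝ) * u (ff x) j := by
  classical
  have hab : t.castSucc ≠ t.succ := by
    simp [Fin.ext_iff]
  rw [← Finset.sum_filter_of_ne (p := fun j => j t.succ ≠ 0)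
    (by intro j _ hne h0; exact hne (by rw [h0, Nat.mul_zero, Nat.cast_zero, zero_mul]))]
  rw [← Finset.sum_filter_of_ne (s := gS (n+2) n (k+1))
    (f := fun j => (x - ((t.1:ℝ)+1)) * (j t.castSucc : ℝ) * u (ff x) j)
    (p := fun j => j t.castSucc ≠ 0)
    (by intro j _ hne h0
        refine hne ?_
        show (x - ((t.1:ℝ)+1)) * (j t.castSucc : ℝ) * u (ff x) j = 0
        rw [h0, Nat.cast_zero, mul_zero, zero_mul])]
  refine Finset.sum_nbij'
    (fun j => Function.update (Function.update j t.succ (j t.succ - 1))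
      t.castSucc (j t.castSucc + 1))
    (fun j => Function.update (Function.update j t.castSucc (j t.castSucc - 1))
      t.succ (j t.succ + 1)) ?_ ?_ ?_ ?_ ?_
  · intro j hj
    obtain ⟨hj, hne⟩ := Finset.mem_filter.1 hj
    obtain ⟨h1, h2⟩ := mem_gS.1 hj
    set J := Function.update (Function.update j t.succ (j t.succ - 1))
      t.castSucc (j t.castSucc + 1) with hJ
    have va : J t.castSucc = j t.castSucc + 1 := by
      rw [hJ, Function.update_self]
    have vb : J t.succ = j t.succ - 1 := by
      rw [hJ, Function.update_of_ne (Ne.symm hab), Function.update_self]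
    have voff : ∀ i ∈ (Finset.univ.erase t.castSucc).erase t.succ, J i = j i := by
      intro i hi
      obtain ⟨hib, hia⟩ := Finset.mem_erase.1 hi
      rw [hJ, Function.update_of_ne (Finset.mem_erase.1 hia).1,
        Function.update_of_ne hib]
    obtain ⟨d, hd⟩ : ∃ d, j t.succ = d + 1 := ⟨j t.succ - 1, by omega⟩
    refine Finset.mem_filter.2 ⟨mem_gS.2 ⟨?_, ?_⟩, ?_⟩
    · rw [sum_split2 hab (fun i => (i.1+1) * J i)]
      rw [sum_split2 hab (fun i => (i.1+1) * j i)] at h1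
      have e2 : ∑ i ∈ (Finset.univ.erase t.castSucc).erase t.succ, (i.1+1) * J i
          = ∑ i ∈ (Finset.univ.erase t.castSucc).erase t.succ, (i.1+1) * j i :=
        Finset.sum_congr rfl fun i hi => by rw [voff i hi]
      simp only [e2, va, vb, Fin.coe_castSucc, Fin.val_succ, hd, Nat.add_sub_cancel] at h1 ⊢
      set R := ∑ i ∈ (Finset.univ.erase t.castSucc).erase t.succ, (i.1+1) * j i with hR
      zify at h1 ⊢
      ring_nf at h1 ⊢
      linarith [h1]
    · rw [sum_split2 hab (fun i => J i)]
      rw [sum_split2 hab (fun i => j i)] at h2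
      have e2 : ∑ i ∈ (Finset.univ.erase t.castSucc).erase t.succ, J i
          = ∑ i ∈ (Finset.univ.erase t.castSucc).erase t.succ, j i :=
        Finset.sum_congr rfl fun i hi => by rw [voff i hi]
      simp only [e2, va, vb] at h2 ⊢
      omega
    · show J t.castSucc ≠ 0
      rw [va]; omega
  · intro j hj
    obtain ⟨hj, hne⟩ := Finset.mem_filter.1 hj
    obtain ⟨h1, h2⟩ := mem_gS.1 hj
    set J := Function.update (Function.update j t.castSucc (j t.castSucc - 1))
      t.succ (j t.succ + 1) with hJ
    have vb : J t.succ = j t.succ + 1 := by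
      rw [hJ, Function.update_self]
    have va : J t.castSucc = j t.castSucc - 1 := by
      rw [hJ, Function.update_of_ne hab, Function.update_self]
    have voff : ∀ i ∈ (Finset.univ.erase t.castSucc).erase t.succ, J i = j i := by
      intro i hi
      obtain ⟨hib, hia⟩ := Finset.mem_erase.1 hi
      rw [hJ, Function.update_of_ne hib, Function.update_of_ne (Finset.mem_erase.1 hia).1]
    obtain ⟨c, hc⟩ : ∃ c, j t.castSucc = c + 1 := ⟨j t.castSucc - 1, by omega⟩
    refine Finset.mem_filter.2 ⟨mem_gS.2 ⟨?_, ?_⟩, ?_⟩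
    · rw [sum_split2 hab (fun i => (i.1+1) * J i)]
      rw [sum_split2 hab (fun i => (i.1+1) * j i)] at h1
      have e2 : ∑ i ∈ (Finset.univ.erase t.castSucc).erase t.succ, (i.1+1) * J i
          = ∑ i ∈ (Finset.univ.erase t.castSucc).erase t.succ, (i.1+1) * j i :=
        Finset.sum_congr rfl fun i hi => by rw [voff i hi]
      simp only [e2, va, vb, Fin.coe_castSucc, Fin.val_succ, hc, Nat.add_sub_cancel] at h1 ⊢
      set R := ∑ i ∈ (Finset.univ.erase t.castSucc).erase t.succ, (i.1+1) * j i with hR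
      zify at h1 ⊢
      ring_nf at h1 ⊢
      linarith [h1]
    · rw [sum_split2 hab (fun i => J i)]
      rw [sum_split2 hab (fun i => j i)] at h2
      have e2 : ∑ i ∈ (Finset.univ.erase t.castSucc).erase t.succ, J i
          = ∑ i ∈ (Finset.univ.erase t.castSucc).erase t.succ, j i :=
        Finset.sum_congr rfl fun i hi => by rw [voff i hi]
      simp only [e2, va, vb] at h2 ⊢
      omega
    · show J t.succ ≠ 0
      rw [vb]; omega
  · intro j hj
    have hne : j t.succ ≠ 0 := (Finset.mem_filter.1 hj).2
    funext i
    beta_reduce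
    by_cases hia : i = t.castSucc
    · subst hia
      rw [Function.update_of_ne hab, Function.update_self, Function.update_self]
      omega
    · by_cases hib : i = t.succ
      · subst hib
        rw [Function.update_self, Function.update_of_ne (Ne.symm hab),
          Function.update_self]
        omega
      · rw [Function.update_of_ne hib, Function.update_of_ne hia,
          Function.update_of_ne hia, Function.update_of_ne hib]
  · intro j hj
    have hne : j t.castSucc ≠ 0 := (Finset.mem_filter.1 hj).2
    funext i
    beta_reduce
    by_cases hia : i = t.castSucc
    · subst hia
      rw [Function.update_self, Function.update_of_ne hab, Function.update_self]
      omega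
    · by_cases hib : i = t.succ
      · subst hib
        rw [Function.update_of_ne (Ne.symm hab), Function.update_self,
          Function.update_self]
        omega
      · rw [Function.update_of_ne hia, Function.update_of_ne hib,
          Function.update_of_ne hib, Function.update_of_ne hia]
  · intro j hj
    have hne : j t.succ ≠ 0 := (Finset.mem_filter.1 hj).2
    obtain ⟨d, hd⟩ : ∃ d, j t.succ = d + 1 := ⟨j t.succ - 1, by omega⟩
    set J := Function.update (Function.update j t.succ (j t.succ - 1))
      t.castSucc (j t.castSucc + 1) with hJ
    have va : J t.castSucc = j t.castSucc + 1 := by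
      rw [hJ, Function.update_self]
    have vb : J t.succ = j t.succ - 1 := by
      rw [hJ, Function.update_of_ne (Ne.symm hab), Function.update_self]
    have voff : ∀ i ∈ (Finset.univ.erase t.castSucc).erase t.succ, J i = j i := by
      intro i hi
      obtain ⟨hib, hia⟩ := Finset.mem_erase.1 hi
      rw [hJ, Function.update_of_ne (Finset.mem_erase.1 hia).1,
        Function.update_of_ne hib]
    have eu : u (ff x) j = w (ff x) t.1 (j t.castSucc) * (w (ff x) (t.1+1) (j t.succ)
        * ∏ i ∈ (Finset.univ.erase t.castSucc).erase t.succ, w (ff x) i.1 (j i)) := by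
      rw [u, prod_split2 hab (fun i => w (ff x) i.1 (j i))]
      simp only [Fin.coe_castSucc, Fin.val_succ]
    have eu' : u (ff x) J = w (ff x) t.1 (j t.castSucc + 1) * (w (ff x) (t.1+1) (j t.succ - 1)
        * ∏ i ∈ (Finset.univ.erase t.castSucc).erase t.succ, w (ff x) i.1 (j i)) := by
      rw [u, prod_split2 hab (fun i => w (ff x) i.1 (J i))]
      simp only [Fin.coe_castSucc, Fin.val_succ, va, vb]
      congr 2
      exact Finset.prod_congr rfl fun i hi => by rw [voff i hi]
    have hb := w_succ (ff x) (t.1+1) d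
    have ha := w_succ (ff x) t.1 (j t.castSucc)
    have key := keyA x t.1
    show (((t.1+1+1) * j t.succ : ℕ) : ℝ) * u (ff x) j
      = (x - ((t.1:ℝ)+1)) * (J t.castSucc : ℝ) * u (ff x) J
    rw [eu, eu', va, hd, Nat.add_sub_cancel]
    push_cast
    set W1 := w (ff x) t.1 (j t.castSucc)
    set W2 := w (ff x) t.1 (j t.castSucc + 1)
    set V1 := w (ff x) (t.1+1) d
    set V2 := w (ff x) (t.1+1) (d+1)
    set P := ∏ i ∈ (Finset.univ.erase t.castSucc).erase t.succ, w (ff x) i.1 (j i)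
    have haa : ((j t.castSucc : ℝ)+1) * W2 = (ff x (t.1+1) / ((t.1+1).factorial : ℝ)) * W1 := ha
    have hbb : ((d:ℝ)+1) * V2 = (ff x (t.1+1+1) / ((t.1+1+1).factorial : ℝ)) * V1 := hb
    have key' : ((t.1:ℝ)+2) * (ff x (t.1+2) / ((t.1+2).factorial : ℝ))
        = (x - ((t.1:ℝ)+1)) * (ff x (t.1+1) / ((t.1+1).factorial : ℝ)) := key
    linear_combination (((t.1:ℝ)+2) * W1 * P) * hbb + (W1 * V1 * P) * key'
      - ((x - ((t.1:ℝ)+1)) * V1 * P) * haa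

lemma step6 (x : ℝ) (n k : ℕ) {j : Fin (n+2) → ℕ} (hj : j ∈ gS (n+2) n (k+1)) :
    ∑ t : Fin (n+1), (x - ((t.1:ℝ)+1)) * (j t.castSucc : ℝ) = ((k:ℝ)+1) * x - n := by
  obtain ⟨h1, h2⟩ := mem_gS.1 hj
  have hlast : j (Fin.last (n+1)) = 0 := gS_zero hj _ (by simp [Fin.last])
  have e1 : ∑ i : Fin (n+2), (x - ((i.1:ℝ)+1)) * (j i : ℝ)
      = ∑ t : Fin (n+1), (x - ((t.1:ℝ)+1)) * (j t.castSucc : ℝ) := by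
    rw [Fin.sum_univ_castSucc (f := fun i : Fin (n+2) => (x - ((i.1:ℝ)+1)) * (j i : ℝ))]
    rw [hlast]
    simp
  rw [← e1]
  have e2 : ∀ i : Fin (n+2), (x - ((i.1:ℝ)+1)) * (j i : ℝ)
      = x * (j i : ℝ) - (((i.1+1) * j i : ℕ) : ℝ) := by
    intro i; push_cast; ring
  rw [Finset.sum_congr rfl fun i _ => e2 i, Finset.sum_sub_distrib, ← Finset.mul_sum,
    ← Nat.cast_sum, ← Nat.cast_sum, h1, h2]
  push_cast
  ring

lemma bell_rec (x : ℝ) (n k : ℕ) :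
    ((n:ℝ)+1) * ∑ j ∈ gS (n+2) (n+1) (k+1), u (ff x) j
      = x * ∑ j ∈ gS (n+2) n k, u (ff x) j
        + (((k:ℝ)+1) * x - n) * ∑ j ∈ gS (n+2) n (k+1), u (ff x) j := by
  have lhs : ((n:ℝ)+1) * ∑ j ∈ gS (n+2) (n+1) (k+1), u (ff x) j
      = ∑ i : Fin (n+2), ∑ j ∈ gS (n+2) (n+1) (k+1), (((i.1+1) * j i : ℕ) : ℝ) * u (ff x) j := by
    rw [Finset.mul_sum, Finset.sum_comm]
    refine Finset.sum_congr rfl fun j hj => ?_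
    obtain ⟨h1, h2⟩ := mem_gS.1 hj
    have : ((n:ℝ)+1) = ((∑ i : Fin (n+2), (i.1+1) * j i : ℕ) : ℝ) := by rw [h1]; push_cast; ring
    rw [this, Nat.cast_sum, Finset.sum_mul]
  rw [lhs, Fin.sum_univ_succ
    (f := fun i : Fin (n+2) => ∑ j ∈ gS (n+2) (n+1) (k+1), (((i.1+1) * j i : ℕ) : ℝ) * u (ff x) j)]
  have e0 : ∑ j ∈ gS (n+2) (n+1) (k+1), ((((0 : Fin (n+2)).1+1) * j 0 : ℕ) : ℝ) * u (ff x) j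
      = x * ∑ j ∈ gS (n+2) n k, u (ff x) j := by
    rw [← partA x n k]
    refine Finset.sum_congr rfl fun j _ => ?_
    norm_num
  have e1 : ∑ t : Fin (n+1), ∑ j ∈ gS (n+2) (n+1) (k+1),
        (((t.succ.1+1) * j t.succ : ℕ) : ℝ) * u (ff x) j
      = (((k:ℝ)+1) * x - n) * ∑ j ∈ gS (n+2) n (k+1), u (ff x) j := by
    have : ∀ t : Fin (n+1), ∑ j ∈ gS (n+2) (n+1) (k+1),
          (((t.succ.1+1) * j t.succ : ℕ) : ℝ) * u (ff x) j
        = ∑ j ∈ gS (n+2) n (k+1), (x - ((t.1:ℝ)+1)) * (j t.castSucc : ℝ) * u (ff x) j :=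
      fun t => partB x n k t
    rw [Finset.sum_congr rfl fun t _ => this t, Finset.sum_comm, Finset.mul_sum]
    refine Finset.sum_congr rfl fun j hj => ?_
    rw [← Finset.sum_mul, step6 x n k hj]
  rw [e0, e1]

lemma st1_zero {n l : ℕ} (h : n < l) : st1 n l = 0 := by
  induction n generalizing l with
  | zero => obtain ⟨l, rfl⟩ : ∃ m, l = m + 1 := ⟨l - 1, by omega⟩; rfl
  | succ n ih =>
    obtain ⟨l, rfl⟩ : ∃ m, l = m + 1 := ⟨l - 1, by omega⟩
    show st1 n l - (n : ℝ) * st1 n (l+1) = 0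
    rw [ih (by omega), ih (by omega), mul_zero, sub_zero]

lemma st2_zero {l k : ℕ} (h : l < k) : st2 l k = 0 := by
  induction l generalizing k with
  | zero => obtain ⟨k, rfl⟩ : ∃ m, k = m + 1 := ⟨k - 1, by omega⟩; rfl
  | succ l ih =>
    obtain ⟨k, rfl⟩ : ∃ m, k = m + 1 := ⟨k - 1, by omega⟩
    show st2 l k + ((k : ℝ) + 1) * st2 l (k+1) = 0
    rw [ih (by omega), ih (by omega), mul_zero, add_zero]

lemma snk_eq_range (n k : ℕ) (x : ℝ) :
    snk n k x = ∑ l ∈ Finset.range (n+1), st1 n l * st2 l k * x ^ l := by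
  rw [snk]
  apply Finset.sum_subset
  · intro l hl
    rw [Finset.mem_Icc] at hl
    rw [Finset.mem_range]
    omega
  · intro l hl hnl
    rw [Finset.mem_range] at hl
    rw [Finset.mem_Icc] at hnl
    rw [st2_zero (by omega), mul_zero, zero_mul]

lemma snk_rec (n k : ℕ) (x : ℝ) :
    snk (n+1) (k+1) x = x * snk n k x + (((k:ℝ)+1) * x - n) * snk n (k+1) x := by
  rw [snk_eq_range, snk_eq_range, snk_eq_range]
  rw [Finset.sum_range_succ' (f := fun l => st1 (n+1) l * st2 l (k+1) * x ^ l)]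
  have f0 : st1 (n+1) 0 * st2 0 (k+1) * x ^ 0 = 0 := by
    rw [show st1 (n+1) 0 = 0 from rfl]; ring
  rw [f0, add_zero]
  have expand : ∀ i, st1 (n+1) (i+1) * st2 (i+1) (k+1) * x ^ (i+1)
      = x * (st1 n i * st2 i k * x ^ i)
        + (((k:ℝ)+1) * x) * (st1 n i * st2 i (k+1) * x ^ i)
        - (n:ℝ) * (st1 n (i+1) * st2 (i+1) (k+1) * x ^ (i+1)) := by
    intro i
    rw [show st1 (n+1) (i+1) = st1 n i - (n : ℝ) * st1 n (i+1) from rfl,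
      show st2 (i+1) (k+1) = st2 i k + ((k : ℝ) + 1) * st2 i (k+1) from rfl]
    ring
  rw [Finset.sum_congr rfl fun i _ => expand i]
  rw [Finset.sum_sub_distrib, Finset.sum_add_distrib, ← Finset.mul_sum, ← Finset.mul_sum,
    ← Finset.mul_sum]
  have eC : ∑ i ∈ Finset.range (n+1), st1 n (i+1) * st2 (i+1) (k+1) * x ^ (i+1)
      = ∑ l ∈ Finset.range (n+1), st1 n l * st2 l (k+1) * x ^ l := by
    rw [Finset.sum_range_succ (f := fun i => st1 n (i+1) * st2 (i+1) (k+1) * x ^ (i+1)),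
      st1_zero (by omega), zero_mul, zero_mul, add_zero,
      Finset.sum_range_succ' (f := fun l => st1 n l * st2 l (k+1) * x ^ l),
      show st2 0 (k+1) = 0 from rfl]
    ring_nf
    exact Finset.sum_congr rfl fun _ _ => by ring
  rw [eC]
  ring

lemma PIdx_eq (n k : ℕ) : PIdx n k = gS (n-k+1) n k := rfl

lemma bellP_eq_gS (n k m : ℕ) (h : n - k + 1 ≤ m) (f : ℕ → ℝ) :
    bellP n k f = (n.factorial : ℝ) * ∑ j ∈ gS m n k, u f j := by
  rw [sum_u_eq f h, bellP, PIdx_eq, Finset.mul_sum]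
  refine Finset.sum_congr rfl fun j _ => ?_
  have : u f j = (∏ i, (f (i.1 + 1) / ((i.1 + 1).factorial : ℝ)) ^ j i)
      / ∏ i, ((j i).factorial : ℝ) := by
    rw [u, ← Finset.prod_div_distrib]
    exact Finset.prod_congr rfl fun i _ => rfl
  rw [this, div_mul_eq_mul_div, mul_div_assoc]

lemma gS_empty_of_gt {m n k : ℕ} (h : n < k) : gS m n k = ∅ := by
  rw [Finset.eq_empty_iff_forall_notMem]
  intro j hj
  obtain ⟨h1, h2⟩ := mem_gS.1 hj
  have : (∑ i, j i) ≤ ∑ i : Fin m, (i.1+1) * j i :=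
    Finset.sum_le_sum fun i _ => Nat.le_mul_of_pos_left _ (Nat.succ_pos _)
  omega

lemma gS_empty_of_kzero {m n : ℕ} (h : n ≠ 0) : gS m n 0 = ∅ := by
  rw [Finset.eq_empty_iff_forall_notMem]
  intro j hj
  obtain ⟨h1, h2⟩ := mem_gS.1 hj
  rw [Finset.sum_eq_zero_iff] at h2
  rw [Finset.sum_congr rfl (fun i hi => by rw [h2 i hi, mul_zero])] at h1
  simp at h1
  exact h (h1.symm)

lemma gS_00 (m : ℕ) : gS m 0 0 = {(fun _ => 0 : Fin m → ℕ)} := by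
  ext j
  rw [mem_gS, Finset.mem_singleton]
  constructor
  · rintro ⟨h1, h2⟩
    rw [Finset.sum_eq_zero_iff] at h2
    funext i
    exact h2 i (Finset.mem_univ i)
  · rintro rfl
    constructor <;> simp

lemma u_zero (f : ℕ → ℝ) (m : ℕ) : u f (fun _ => 0 : Fin m → ℕ) = 1 := by
  rw [u]
  exact Finset.prod_eq_one fun i _ => w_zero f i.1

lemma master (n k : ℕ) (x : ℝ) : bellP n k (fun l => ff x l) = snk n k x := by
  induction n generalizing k with
  | zero =>
    cases k with
    | zero =>
      rw [bellP_eq_gS 0 0 1 (by omega), gS_00, Finset.sum_singleton, u_zero]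
      simp [snk, st1, st2]
    | succ k =>
      rw [bellP_eq_gS 0 (k+1) 1 (by omega), gS_empty_of_gt (by omega), Finset.sum_empty,
        snk, Finset.Icc_eq_empty (by omega), Finset.sum_empty, mul_zero]
  | succ n ih =>
    cases k with
    | zero =>
      rw [bellP_eq_gS (n+1) 0 (n+2) (by omega), gS_empty_of_kzero (by omega),
        Finset.sum_empty, mul_zero, snk_eq_range]
      refine (Finset.sum_eq_zero fun l hl => ?_).symm
      cases l with
      | zero => rw [show st1 (n+1) 0 = 0 from rfl]; ring
      | succ l => rw [show st2 (l+1) 0 = 0 from rfl]; ring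
    | succ k =>
      rw [bellP_eq_gS (n+1) (k+1) (n+2) (by omega)]
      have e : ((n+1).factorial : ℝ) * ∑ j ∈ gS (n+2) (n+1) (k+1), u (ff x) j
          = (n.factorial : ℝ) * (((n:ℝ)+1) * ∑ j ∈ gS (n+2) (n+1) (k+1), u (ff x) j) := by
        rw [Nat.factorial_succ]; push_cast; ring
      rw [e, bell_rec, mul_add, snk_rec]
      rw [show (n.factorial : ℝ) * (x * ∑ j ∈ gS (n+2) n k, u (ff x) j)
          = x * ((n.factorial : ℝ) * ∑ j ∈ gS (n+2) n k, u (ff x) j) from by ring]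
      rw [show (n.factorial : ℝ) * ((((k:ℝ)+1) * x - n) * ∑ j ∈ gS (n+2) n (k+1), u (ff x) j)
          = (((k:ℝ)+1) * x - n) * ((n.factorial : ℝ) * ∑ j ∈ gS (n+2) n (k+1), u (ff x) j)
          from by ring]
      rw [← bellP_eq_gS n k (n+2) (by omega) (ff x),
        ← bellP_eq_gS n (k+1) (n+2) (by omega) (ff x)]
      rw [ih k, ih (k+1)]

lemma bellP_factor (n k : ℕ) (x y : ℝ) (hy : 0 < y) :
    bellP n k (fun l => ff x l * y ^ (x - (l : ℝ)))
      = y ^ (x * (k:ℝ) - (n:ℝ)) * bellP n k (fun l => ff x l) := by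
  rw [bellP, bellP, Finset.mul_sum]
  refine Finset.sum_congr rfl fun j hj => ?_
  obtain ⟨h1, h2⟩ := mem_gS.1 (show j ∈ gS (n-k+1) n k from by rw [← PIdx_eq]; exact hj)
  have ep : ∀ i : Fin (n-k+1),
      ((ff x (i.1+1) * y ^ (x - ((i.1+1 : ℕ) : ℝ))) / (((i.1+1).factorial : ℝ))) ^ (j i)
      = (ff x (i.1+1) / ((i.1+1).factorial : ℝ)) ^ (j i)
        * y ^ ((x - ((i.1+1 : ℕ) : ℝ)) * (j i : ℝ)) := by
    intro i
    rw [mul_div_right_comm, mul_pow, ← Real.rpow_natCast (y ^ (x - ((i.1+1 : ℕ) : ℝ))) (j i),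
      ← Real.rpow_mul hy.le]
  rw [Finset.prod_congr rfl fun i _ => ep i, Finset.prod_mul_distrib,
    ← Real.rpow_sum_of_pos hy]
  have eexp : ∑ i : Fin (n-k+1), (x - ((i.1+1 : ℕ) : ℝ)) * (j i : ℝ)
      = x * (k:ℝ) - (n:ℝ) := by
    have e2 : ∀ i : Fin (n-k+1), (x - ((i.1+1 : ℕ) : ℝ)) * (j i : ℝ)
        = x * (j i : ℝ) - (((i.1+1) * j i : ℕ) : ℝ) := by
      intro i; push_cast; ring
    rw [Finset.sum_congr rfl fun i _ => e2 i, Finset.sum_sub_distrib, ← Finset.mul_sum,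
      ← Nat.cast_sum, ← Nat.cast_sum, h1, h2]
  rw [eexp]
  ring

/-- `B_{n,k}((x)_1 y^{x-1}, …, (x)_{n-k+1} y^{x-(n-k+1)}) = y^{xk-n} s_{nk}(x)`. -/
theorem stmt4 (n k : ℕ) (hn : 1 ≤ n) (hkn : k ≤ n) (x y : ℝ) (hy : 0 < y) :
    bellP n k (fun l => ff x l * y ^ (x - (l : ℝ))) =
      y ^ (x * (k : ℝ) - (n : ℝ)) * snk n k x := by
  rw [bellP_factor n k x y hy, master n k x]
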